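/- Let (Ω, 𝔉, P) be a probability space, let X and W be measurable spaces, and let (h_{(x,w)})_{(x,w)∈X×W} be a centered Gaussian process on Ω with product covariance function E[h_{(x,w)}·h_{(x′,w′)}] = k_X(x, x′)·k_W(w, w′), such that each h_{(x,w)} ∈ L²(Ω, P) and for each x the map w ↦ h_{(x,w)} ∈ L²(Ω, P) is strongly measurable. Let P_W be a probability measure on W such that for each x the map w ↦ h_{(x,w)} is Bochner integrable in L²(Ω, P) with respect to P_W, and define f_x = ∫ h_{(x,w)} dP_W(w) (Bochner integral in L²(Ω, P)). Then (f_x)_{x∈X} is a centered Gaussian process with covariance function r(x, x′) = k_X(x, x′) · c_W, where c_W = ∬ k_W(w, w′) dP_W(w) dP_W(w′). -/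

import Mathlib

open MeasureTheory ProbabilityTheory

open Real Filter
open scoped ENNReal NNReal Topology BoundedContinuousFunction

/-- A process `(f_t)_{t ∈ T}` on a measure space `(Ω, P)` is a centered Gaussian process
if every finite real linear combination `∑ i, c i * f (t i)` is a centered real Gaussian
random variable. -/
def IsCenteredGaussianProcess {Ω T : Type*} [MeasurableSpace Ω]
    (P : Measure Ω) (f : T → Ω → ℝ) : Prop :=
  ∀ (n : ℕ) (t : Fin n → T) (c : Fin n → ℝ), ∃ v : NNReal,
    P.map (fun ω => ∑ i, c i * f (t i) ω) = gaussianReal 0 v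

section Aux

lemma lemC (v : ℝ≥0) : ∫ x, Real.exp (-(x^2)/2) ∂(gaussianReal 0 v) = (Real.sqrt (1 + v))⁻¹ := by
  rcases eq_or_ne v 0 with rfl | hv
  · simp
  rw [gaussianReal_of_var_ne_zero _ hv]
  have hpdf : (gaussianPDF 0 v) = fun x => ((gaussianPDFReal 0 v x).toNNReal : ℝ≥0∞) := rfl
  rw [hpdf, integral_withDensity_eq_integral_smul
    ((measurable_gaussianPDFReal 0 v).real_toNNReal)]
  have hv' : (0:ℝ) < v := lt_of_le_of_ne (NNReal.coe_nonneg v) (by exact_mod_cast hv.symm)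
  have hb : (0:ℝ) < (1 + v)/(2*v) := by positivity
  have h2pv : (0:ℝ) < Real.sqrt (2*π*v) := Real.sqrt_pos.2 (by positivity)
  calc ∫ x, (gaussianPDFReal 0 v x).toNNReal • Real.exp (-(x^2)/2)
      = ∫ x : ℝ, (Real.sqrt (2*π*v))⁻¹ * Real.exp (-((1+v)/(2*v)) * x^2) := by
        congr 1; ext x
        rw [NNReal.smul_def, smul_eq_mul,
          Real.coe_toNNReal _ (gaussianPDFReal_nonneg _ _ _), gaussianPDFReal]
        rw [mul_assoc, ← Real.exp_add]
        congr 1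
        field_simp
        ring
    _ = (Real.sqrt (2*π*v))⁻¹ * Real.sqrt (π / ((1+v)/(2*v))) := by
        rw [integral_const_mul, integral_gaussian]
    _ = (Real.sqrt (1 + v))⁻¹ := by
        have : π / ((1+v)/(2*v)) = (2*π*v) / (1+v) := by field_simp
        rw [this, Real.sqrt_div (by positivity)]
        field_simp

lemma gauss_scale (v : ℝ≥0) :
    gaussianReal 0 v = (gaussianReal 0 1).map (fun x => Real.sqrt v * x) := by
  have h := gaussianReal_map_const_mul (μ := 0) (v := 1) (Real.sqrt v)
  have : (⟨(Real.sqrt v)^2, sq_nonneg _⟩ : ℝ≥0) * 1 = v := by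
    ext; simp [Real.sq_sqrt v.coe_nonneg]
  rw [mul_zero] at h
  rw [h]
  congr 1
  ext; simp [Real.sq_sqrt v.coe_nonneg]

lemma lemD {vs : ℕ → ℝ≥0} {v : ℝ≥0} (hv : Filter.Tendsto vs atTop (𝓝 v)) (g : ℝ →ᵇ ℝ) :
    Tendsto (fun n => ∫ x, g x ∂(gaussianReal 0 (vs n))) atTop
      (𝓝 (∫ x, g x ∂(gaussianReal 0 v))) := by
  have key : ∀ w : ℝ≥0, ∫ x, g x ∂(gaussianReal 0 w)
      = ∫ x, g (Real.sqrt w * x) ∂(gaussianReal 0 1) := by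
    intro w
    rw [gauss_scale w, integral_map (measurable_const_mul _).aemeasurable
      g.continuous.aestronglyMeasurable]
  simp_rw [key]
  refine tendsto_integral_of_dominated_convergence (fun _ => ‖g‖)
    (fun n => (g.continuous.comp (continuous_const.mul continuous_id)).aestronglyMeasurable)
    (integrable_const _) (fun n => ae_of_all _ fun x => g.norm_coe_le_norm _)
    (ae_of_all _ fun x => ?_)
  have hs : Tendsto (fun n => Real.sqrt (vs n) * x) atTop (𝓝 (Real.sqrt v * x)) := by
    exact ((Real.continuous_sqrt.tendsto _).comp (NNReal.tendsto_coe.2 hv)).mul_const x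
  exact (g.continuous.tendsto _).comp hs

lemma lemE {Ω : Type*} [MeasurableSpace Ω] {P : Measure Ω} [IsProbabilityMeasure P]
    {Zs : ℕ → Lp ℝ 2 P} {Z : Lp ℝ 2 P} (hZ : Tendsto Zs atTop (𝓝 Z)) (g : ℝ →ᵇ ℝ) :
    Tendsto (fun n => ∫ ω, g (Zs n ω) ∂P) atTop (𝓝 (∫ ω, g (Z ω) ∂P)) := by
  have hm : TendstoInMeasure P (fun n => ⇑(Zs n)) atTop ⇑Z :=
    tendstoInMeasure_of_tendsto_Lp hZ
  refine tendsto_of_subseq_tendsto (fun ns hns => ?_)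
  have hm' : TendstoInMeasure P (fun n => ⇑(Zs (ns n))) atTop ⇑Z :=
    fun ε hε => (hm ε hε).comp hns
  obtain ⟨ms, -, hae⟩ := hm'.exists_seq_tendsto_ae
  refine ⟨ms, ?_⟩
  refine tendsto_integral_of_dominated_convergence (fun _ => ‖g‖)
    (fun n => g.continuous.comp_aestronglyMeasurable (Lp.aestronglyMeasurable _))
    (integrable_const _) (fun n => ae_of_all _ fun x => g.norm_coe_le_norm _) ?_
  filter_upwards [hae] with ω hω
  exact (g.continuous.tendsto _).comp hω

lemma lemA {Ω : Type*} [MeasurableSpace Ω] {P : Measure Ω} [IsProbabilityMeasure P]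
    {Zs : ℕ → Lp ℝ 2 P} {Z : Lp ℝ 2 P} (hZ : Tendsto Zs atTop (𝓝 Z))
    (hg : ∀ n, ∃ v : ℝ≥0, P.map (Zs n) = gaussianReal 0 v) :
    ∃ v : ℝ≥0, P.map Z = gaussianReal 0 v := by
  choose vs hvs using hg
  -- the bounded continuous function exp (-x^2/2)
  set g : ℝ →ᵇ ℝ := BoundedContinuousFunction.ofNormedAddCommGroup
    (fun x => Real.exp (-(x^2)/2)) (by fun_prop) 1 (fun x => by
      rw [Real.norm_eq_abs, abs_of_pos (Real.exp_pos _)]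
      exact Real.exp_le_one_iff.2 (by nlinarith [sq_nonneg x])) with hg_def
  have hgx : ∀ x, g x = Real.exp (-(x^2)/2) := fun x => rfl
  -- integrals of g against the laws
  have hmapint : ∀ (Y : Lp ℝ 2 P), ∫ x, g x ∂(P.map Y) = ∫ ω, g (Y ω) ∂P := by
    intro Y
    rw [integral_map (Lp.aestronglyMeasurable Y).aemeasurable
      g.continuous.aestronglyMeasurable]
  have hLpos : 0 < ∫ ω, g (Z ω) ∂P := by
    rw [← hmapint]
    have : IsProbabilityMeasure (P.map Z) :=
      Measure.isProbabilityMeasure_map (Lp.aestronglyMeasurable Z).aemeasurable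
    refine (integral_pos_iff_support_of_nonneg (fun x => (Real.exp_pos _).le) ?_).2 ?_
    · exact (BoundedContinuousFunction.integrable _ g)
    · have hsupp : Function.support (fun x : ℝ => Real.exp (-(x^2)/2)) = Set.univ := by
        ext x; simp [(Real.exp_pos _).ne']
      simp only [hgx, hsupp]
      simp
  set L : ℝ := ∫ ω, g (Z ω) ∂P
  -- convergence of the test integrals
  have htest : Tendsto (fun n => ∫ ω, g (Zs n ω) ∂P) atTop (𝓝 L) := lemE hZ g
  have hval : ∀ n, ∫ ω, g (Zs n ω) ∂P = (Real.sqrt (1 + vs n))⁻¹ := by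
    intro n
    rw [← hmapint, hvs n]
    simpa [hgx] using lemC (vs n)
  -- convergence of the variances
  have hv_tendsto : Tendsto (fun n => ((vs n : ℝ))) atTop (𝓝 (L⁻¹^2 - 1)) := by
    have h1 : Tendsto (fun n => (Real.sqrt (1 + vs n))⁻¹) atTop (𝓝 L) := by
      simpa [hval] using htest
    have h2 : Tendsto (fun n => ((Real.sqrt (1 + vs n))⁻¹)⁻¹^2 - 1) atTop
        (𝓝 (L⁻¹^2 - 1)) :=
      (((h1.inv₀ hLpos.ne').pow 2).sub tendsto_const_nhds)
    convert h2 using 2 with n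
    rw [inv_inv, Real.sq_sqrt (by positivity)]
    ring
  have hnonneg : 0 ≤ L⁻¹^2 - 1 :=
    ge_of_tendsto hv_tendsto (Filter.Eventually.of_forall fun n => (vs n).coe_nonneg)
  set vlim : ℝ≥0 := Real.toNNReal (L⁻¹^2 - 1) with hvlim
  have hv_nn : Tendsto vs atTop (𝓝 vlim) := by
    rw [← NNReal.tendsto_coe]
    rwa [hvlim, Real.coe_toNNReal _ hnonneg]
  refine ⟨vlim, ?_⟩
  have hPmap : IsProbabilityMeasure (P.map Z) :=
    Measure.isProbabilityMeasure_map (Lp.aestronglyMeasurable Z).aemeasurable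
  set A : ProbabilityMeasure ℝ := ⟨P.map Z, hPmap⟩ with hA
  set B : ProbabilityMeasure ℝ := ⟨gaussianReal 0 vlim, inferInstance⟩ with hB
  set μn : ℕ → ProbabilityMeasure ℝ := fun n => ⟨gaussianReal 0 (vs n), inferInstance⟩
  have hmapint' : ∀ (f : ℝ →ᵇ ℝ) (Y : Lp ℝ 2 P),
      ∫ x, f x ∂(P.map Y) = ∫ ω, f (Y ω) ∂P := by
    intro f Y
    rw [integral_map (Lp.aestronglyMeasurable Y).aemeasurable
      f.continuous.aestronglyMeasurable]
  have hA_lim : Tendsto μn atTop (𝓝 A) := by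
    rw [ProbabilityMeasure.tendsto_iff_forall_integral_tendsto]
    intro f
    have : ∀ n, ∫ x, f x ∂(μn n : Measure ℝ) = ∫ ω, f (Zs n ω) ∂P := by
      intro n
      have hc : (μn n : Measure ℝ) = P.map (Zs n) := (hvs n).symm
      rw [hc, hmapint']
    simp_rw [this]
    have hAc : (A : Measure ℝ) = P.map Z := rfl
    rw [hAc, hmapint' f Z]
    exact lemE hZ f
  have hB_lim : Tendsto μn atTop (𝓝 B) := by
    rw [ProbabilityMeasure.tendsto_iff_forall_integral_tendsto]
    intro f
    exact lemD hv_nn f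
  have : A = B := tendsto_nhds_unique hA_lim hB_lim
  have := congrArg (fun m : ProbabilityMeasure ℝ => (m : Measure ℝ)) this
  simpa [hA, hB] using this

lemma coeFn_sum_smul {Ω : Type*} [MeasurableSpace Ω] {P : Measure Ω}
    {ι : Type*} (s : Finset ι) (cc : ι → ℝ) (F : ι → Lp ℝ 2 P) :
    ⇑(∑ i ∈ s, cc i • F i) =ᵐ[P] fun ω => ∑ i ∈ s, cc i * F i ω := by
  classical
  induction s using Finset.induction_on with
  | empty =>
    simp only [Finset.sum_empty]
    exact Lp.coeFn_zero ℝ 2 P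
  | insert a s' hx ih =>
    rw [Finset.sum_insert hx]
    filter_upwards [Lp.coeFn_add (cc a • F a) (∑ i ∈ s', cc i • F i),
      Lp.coeFn_smul (cc a) (F a), ih] with ω h1 h2 h3
    simp only [Pi.add_apply] at h1
    rw [h1, h2, h3, Finset.sum_insert hx]
    simp [smul_eq_mul]

theorem part1
    {Ω : Type*} [MeasurableSpace Ω] (P : Measure Ω) [IsProbabilityMeasure P]
    {X W : Type*} [MeasurableSpace X] [MeasurableSpace W]
    (h : X × W → Lp ℝ 2 P)
    (hGP : IsCenteredGaussianProcess P (fun p => ⇑(h p)))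
    (PW : Measure W) [IsProbabilityMeasure PW]
    (hint : ∀ x, Integrable (fun w => h (x, w)) PW)
    (f : X → Lp ℝ 2 P) (hf : ∀ x, f x = ∫ w, h (x, w) ∂PW) :
    IsCenteredGaussianProcess P (fun x => ⇑(f x)) := by
  -- every element of the span of the range of h is a centered Gaussian
  have span_gauss : ∀ Z' : Lp ℝ 2 P, Z' ∈ Submodule.span ℝ (Set.range h) →
      ∃ v : ℝ≥0, P.map ⇑Z' = gaussianReal 0 v := by
    intro Z' hZ'
    obtain ⟨m, cc, gg, hsum⟩ := Submodule.mem_span_set'.1 hZ'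
    have hq : ∀ i : Fin m, ∃ p : X × W, h p = (gg i : Lp ℝ 2 P) := fun i => (gg i).2
    choose q hq using hq
    obtain ⟨v, hv⟩ := hGP m q cc
    refine ⟨v, ?_⟩
    rw [← hv]
    apply Measure.map_congr
    have : Z' = ∑ i, cc i • h (q i) := by rw [← hsum]; simp [hq]
    rw [this]
    filter_upwards [coeFn_sum_smul Finset.univ cc (fun i => h (q i))] with ω hω
    exact hω
  have closure_gauss : ∀ Z : Lp ℝ 2 P,
      Z ∈ closure ((Submodule.span ℝ (Set.range h) : Submodule ℝ (Lp ℝ 2 P)) : Set (Lp ℝ 2 P)) →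
      ∃ v : ℝ≥0, P.map ⇑Z = gaussianReal 0 v := by
    intro Z hZ
    haveI : FrechetUrysohnSpace (Lp ℝ 2 P) :=
      FirstCountableTopology.frechetUrysohnSpace (X := Lp ℝ 2 P)
    obtain ⟨Zs, hZs_mem, hZs_lim⟩ := mem_closure_iff_seq_limit.1 hZ
    exact lemA hZs_lim (fun n => span_gauss _ (hZs_mem n))
  intro n t c
  have hgint : ∀ i : Fin n, Integrable (fun w => c i • h (t i, w)) PW :=
    fun i => (hint (t i)).smul (c i)
  have hZint : (∫ w, ∑ i, c i • h (t i, w) ∂PW) = ∑ i, c i • f (t i) := by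
    rw [integral_finset_sum _ fun i _ => hgint i]
    refine Finset.sum_congr rfl fun i _ => ?_
    rw [integral_smul, ← hf]
  set Z : Lp ℝ 2 P := ∑ i, c i • f (t i) with hZdef
  have hZmem : Z ∈ closure ((Submodule.span ℝ (Set.range h) : Submodule ℝ (Lp ℝ 2 P))
      : Set (Lp ℝ 2 P)) := by
    rw [← hZint]
    refine Convex.integral_mem ((Submodule.span ℝ (Set.range h)).convex.closure)
      isClosed_closure (ae_of_all _ fun w => subset_closure ?_)
      (integrable_finset_sum _ fun i _ => hgint i)
    exact Submodule.sum_mem _ fun i _ =>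
      Submodule.smul_mem _ _ (Submodule.subset_span ⟨(t i, w), rfl⟩)
  obtain ⟨v, hv⟩ := closure_gauss Z hZmem
  refine ⟨v, ?_⟩
  rw [← hv]
  exact Measure.map_congr (coeFn_sum_smul Finset.univ c (fun i => f (t i))).symm

end Aux

/-- Marginalizing the outcome proxy out of a Gaussian-process bridge function. If
`(h_{(x,w)})` is a centered Gaussian process with product covariance
`E[h_{(x,w)} h_{(x′,w′)}] = k_X(x,x′)·k_W(w,w′)` and `f_x = ∫ h_{(x,w)} dP_W(w)` for a
probability measure `P_W` on `W`, then `(f_x)` is a centered Gaussian process with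
covariance `r(x, x′) = k_X(x, x′) · c_W`, where
`c_W = ∬ k_W(w, w′) dP_W(w) dP_W(w′)`. -/
theorem marginalized_bridge_process_proxy
    {Ω : Type*} [MeasurableSpace Ω] (P : Measure Ω) [IsProbabilityMeasure P]
    {X W : Type*} [MeasurableSpace X] [MeasurableSpace W]
    (h : X × W → Lp ℝ 2 P)
    (hmeas : ∀ x, StronglyMeasurable (fun w => h (x, w)))
    (hGP : IsCenteredGaussianProcess P (fun p => ⇑(h p)))
    (kX : X → X → ℝ) (kW : W → W → ℝ)
    (hcov : ∀ x x' w w', (∫ ω, h (x, w) ω * h (x', w') ω ∂P) = kX x x' * kW w w')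
    (PW : Measure W) [IsProbabilityMeasure PW]
    (hint : ∀ x, Integrable (fun w => h (x, w)) PW)
    (f : X → Lp ℝ 2 P) (hf : ∀ x, f x = ∫ w, h (x, w) ∂PW) :
    IsCenteredGaussianProcess P (fun x => ⇑(f x)) ∧
    ∀ x x', (∫ ω, f x ω * f x' ω ∂P)
      = kX x x' * ∫ w', ∫ w, kW w w' ∂PW ∂PW := by
  refine ⟨part1 P h hGP PW hint f hf, ?_⟩
  intro x x'
  have hinner : ∀ (g g' : Lp ℝ 2 P), (inner (𝕜 := ℝ) g g' : ℝ) = ∫ ω, g ω * g' ω ∂P := by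
    intro g g'
    rw [L2.inner_def]
    simp [RCLike.inner_apply]
    exact integral_congr_ae (ae_of_all _ fun a => mul_comm _ _)
  have key : (inner (𝕜 := ℝ) (f x) (f x') : ℝ)
      = kX x x' * ∫ w', ∫ w, kW w w' ∂PW ∂PW := by
    have h1 : (inner (𝕜 := ℝ) (f x) (f x') : ℝ)
        = ∫ w', inner (𝕜 := ℝ) (f x) (h (x', w')) ∂PW := by
      rw [hf x', integral_inner (hint x')]
    rw [h1]
    have h2 : ∀ w', (inner (𝕜 := ℝ) (f x) (h (x', w')) : ℝ)
        = kX x x' * ∫ w, kW w w' ∂PW := by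
      intro w'
      rw [real_inner_comm, hf x, ← integral_inner (hint x)]
      have : ∀ w, (inner (𝕜 := ℝ) (h (x', w')) (h (x, w)) : ℝ) = kX x x' * kW w w' := by
        intro w
        rw [real_inner_comm, hinner, hcov]
      simp_rw [this]
      rw [integral_const_mul]
    simp_rw [h2]
    rw [integral_const_mul]
  rw [← hinner, key]
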